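/- Let h(y) = tanh(y/2), 0 < c₀ < 1, γ > 0, α < 0, and suppose v̂ ∈ H⁴(ℝ) satisfies -(1+∂_y²)²v̂ + c₀∂_y v̂ + αv̂ - γ(1-h²)v̂ = λv̂ for some λ ∈ ℂ with Re λ > α. Then v̂ = 0. -/

import Mathlib

open MeasureTheory Filter Set Complex ComplexConjugate Topology
open scoped ENNReal NNReal

noncomputable section

private lemma memL2_conj {f : ℝ → ℂ} (hf : MemLp f 2 volume) :
    MemLp (fun x => conj (f x)) 2 volume := by
  refine ⟨?_, ?_⟩
  · exact continuous_star.comp_aestronglyMeasurable hf.1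
  · have h : eLpNorm (fun x => conj (f x)) 2 volume = eLpNorm f 2 volume :=
      eLpNorm_congr_norm_ae (Eventually.of_forall fun x => by simp)
    rw [h]; exact hf.2

private lemma integrable_mul_L2 {f g : ℝ → ℂ} (hf : MemLp f 2 volume) (hg : MemLp g 2 volume) :
    Integrable (fun x => f x * g x) volume := by
  have h121 : (1 : ℝ≥0∞) / 1 = 1 / 2 + 1 / 2 := by
    rw [div_one, ENNReal.add_halves]
  have h := hg.smul (r := 1) hf
  have := memLp_one_iff_integrable.mp h
  simpa [Pi.smul_apply, smul_eq_mul, Pi.mul_def] using this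

private lemma integrable_normSq {f : ℝ → ℂ} (hf : MemLp f 2 volume) :
    Integrable (fun x => Complex.normSq (f x)) volume := by
  have h := (integrable_mul_L2 hf (memL2_conj hf)).re
  exact h.congr (Eventually.of_forall fun x => by simp [Complex.mul_conj])

private lemma limit_eq_zero_atTop {f : ℝ → ℝ} (hi : Integrable f volume) (hnn : ∀ x, 0 ≤ f x)
    {L : ℝ} (hL : Tendsto f atTop (𝓝 L)) : L = 0 := by
  by_contra hne
  have hL0 : 0 < L := (ge_of_tendsto' hL hnn).lt_of_ne (Ne.symm hne)
  obtain ⟨a, ha⟩ := eventually_atTop.mp (hL.eventually (eventually_gt_nhds (half_lt_self hL0)))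
  have hint : Integrable (fun _ : ℝ => L / 2) (volume.restrict (Ici a)) := by
    refine (hi.integrableOn).mono' aestronglyMeasurable_const ?_
    refine (ae_restrict_iff' measurableSet_Ici).2 (Eventually.of_forall fun x hx => ?_)
    rw [Real.norm_eq_abs, abs_of_pos (half_pos hL0)]
    exact (ha x hx).le
  rcases integrable_const_iff.mp hint with h | h
  · exact (half_pos hL0).ne' h
  · have h := h.measure_univ_lt_top
    rw [Measure.restrict_apply_univ, Real.volume_Ici] at h
    exact (lt_irrefl _ h).elim

private lemma limit_eq_zero_atBot {f : ℝ → ℝ} (hi : Integrable f volume) (hnn : ∀ x, 0 ≤ f x)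
    {L : ℝ} (hL : Tendsto f atBot (𝓝 L)) : L = 0 := by
  by_contra hne
  have hL0 : 0 < L := (ge_of_tendsto' hL hnn).lt_of_ne (Ne.symm hne)
  obtain ⟨a, ha⟩ := eventually_atBot.mp (hL.eventually (eventually_gt_nhds (half_lt_self hL0)))
  have hint : Integrable (fun _ : ℝ => L / 2) (volume.restrict (Iic a)) := by
    refine (hi.integrableOn).mono' aestronglyMeasurable_const ?_
    refine (ae_restrict_iff' measurableSet_Iic).2 (Eventually.of_forall fun x hx => ?_)
    rw [Real.norm_eq_abs, abs_of_pos (half_pos hL0)]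
    exact (ha x hx).le
  rcases integrable_const_iff.mp hint with h | h
  · exact (half_pos hL0).ne' h
  · have h := h.measure_univ_lt_top
    rw [Measure.restrict_apply_univ, Real.volume_Iic] at h
    exact (lt_irrefl _ h).elim

/-- An `H¹` function on `ℝ` tends to `0` at `±∞`. -/
private lemma decay_L2 {f f' : ℝ → ℂ} (hd : ∀ x, HasDerivAt f (f' x) x)
    (hf : MemLp f 2 volume) (hf' : MemLp f' 2 volume) :
    Tendsto f atTop (𝓝 0) ∧ Tendsto f atBot (𝓝 0) := by
  set F : ℝ → ℝ := fun x => Complex.normSq (f x) with hF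
  set G : ℝ → ℝ := fun x => 2 * (conj (f x) * f' x).re with hG
  have hdF : ∀ x, HasDerivAt F (G x) x := by
    intro x
    have h1 : HasDerivAt (fun y => (f y).re) ((f' x).re) x :=
      Complex.reCLM.hasFDerivAt.comp_hasDerivAt x (hd x)
    have h2 : HasDerivAt (fun y => (f y).im) ((f' x).im) x :=
      Complex.imCLM.hasFDerivAt.comp_hasDerivAt x (hd x)
    have h3 := (h1.fun_pow 2).fun_add (h2.fun_pow 2)
    have hFeq : F = fun y => (f y).re ^ 2 + (f y).im ^ 2 := by
      funext y; simp [hF, Complex.normSq_apply, sq]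
    rw [hFeq]
    refine h3.congr_deriv ?_
    simp [hG, Complex.mul_re]
    ring
  have hiF : Integrable F volume := integrable_normSq hf
  have hiG : Integrable G volume := by
    have h := (integrable_mul_L2 (memL2_conj hf) hf').re
    exact (h.const_mul 2).congr (Eventually.of_forall fun x => by simp [hG])
  have key : ∀ x : ℝ, F x = F 0 + ∫ t in (0:ℝ)..x, G t := by
    intro x
    have h := intervalIntegral.integral_eq_sub_of_hasDerivAt (f := F) (f' := G)
      (a := (0:ℝ)) (b := x) (fun t _ => hdF t) (hiG.intervalIntegrable)
    rw [h]; ring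
  have htop : Tendsto F atTop (𝓝 (F 0 + ∫ x in Ioi (0:ℝ), G x)) := by
    have h2 := intervalIntegral_tendsto_integral_Ioi 0 hiG.integrableOn tendsto_id
    exact (tendsto_const_nhds.add h2).congr fun x => (key x).symm
  have hbot : Tendsto F atBot (𝓝 (F 0 - ∫ x in Iic (0:ℝ), G x)) := by
    have h2 := intervalIntegral_tendsto_integral_Iic 0 hiG.integrableOn tendsto_id
    have key2 : ∀ x : ℝ, F x = F 0 - ∫ t in x..(0:ℝ), G t := by
      intro x
      have h := intervalIntegral.integral_eq_sub_of_hasDerivAt (f := F) (f' := G)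
        (a := x) (b := (0:ℝ)) (fun t _ => hdF t) (hiG.intervalIntegrable)
      rw [h]; ring
    exact (tendsto_const_nhds.sub h2).congr fun x => (key2 x).symm
  have hnn : ∀ x, 0 ≤ F x := fun x => Complex.normSq_nonneg _
  have h0t : Tendsto F atTop (𝓝 0) := by
    rwa [limit_eq_zero_atTop hiF hnn htop] at htop
  have h0b : Tendsto F atBot (𝓝 0) := by
    rwa [limit_eq_zero_atBot hiF hnn hbot] at hbot
  have hnorm : ∀ x, ‖f x‖ = Real.sqrt (F x) := fun x => by
    rw [hF]; rw [Complex.norm_def]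
  constructor
  · rw [tendsto_zero_iff_norm_tendsto_zero]
    have := (Real.continuous_sqrt.tendsto 0).comp h0t
    simpa using this.congr fun x => (hnorm x).symm
  · rw [tendsto_zero_iff_norm_tendsto_zero]
    have := (Real.continuous_sqrt.tendsto 0).comp h0b
    simpa using this.congr fun x => (hnorm x).symm

private lemma integral_deriv_eq_zero {G G' : ℝ → ℂ} (hd : ∀ x, HasDerivAt G (G' x) x)
    (hi : Integrable G' volume) (ht : Tendsto G atTop (𝓝 0)) (hb : Tendsto G atBot (𝓝 0)) :
    ∫ x, G' x = 0 := by
  rw [← intervalIntegral.integral_Iic_add_Ioi (b := (0:ℝ)) hi.integrableOn hi.integrableOn,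
    integral_Ioi_of_hasDerivAt_of_tendsto' (fun x _ => hd x) hi.integrableOn ht,
    integral_Iic_of_hasDerivAt_of_tendsto' (fun x _ => hd x) hi.integrableOn hb]
  ring

/-- Integration by parts on `ℝ` for `H¹` functions. -/
private lemma ibp {f f' g g' : ℝ → ℂ}
    (hdf : ∀ x, HasDerivAt f (f' x) x) (hdg : ∀ x, HasDerivAt g (g' x) x)
    (hf : MemLp f 2 volume) (hf' : MemLp f' 2 volume)
    (hg : MemLp g 2 volume) (hg' : MemLp g' 2 volume) :
    ∫ x, f' x * conj (g x) = - ∫ x, f x * conj (g' x) := by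
  have hft := decay_L2 hdf hf hf'
  have hgt := decay_L2 hdg hg hg'
  have hdP : ∀ x, HasDerivAt (fun y => f y * conj (g y))
      (f' x * conj (g x) + f x * conj (g' x)) x := by
    intro x
    have h2 : HasDerivAt (fun y => conj (g y)) (conj (g' x)) x := (hdg x).star
    exact (hdf x).mul h2
  have hint1 : Integrable (fun x => f' x * conj (g x)) volume :=
    integrable_mul_L2 hf' (memL2_conj hg)
  have hint2 : Integrable (fun x => f x * conj (g' x)) volume :=
    integrable_mul_L2 hf (memL2_conj hg')
  have htop : Tendsto (fun y => f y * conj (g y)) atTop (𝓝 0) := by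
    have hc : Tendsto (fun y => conj (g y)) atTop (𝓝 0) := by
      have h := (continuous_star.tendsto (0:ℂ)).comp hgt.1
      rw [star_zero] at h
      exact h
    have h := hft.1.mul hc
    rw [mul_zero] at h
    exact h
  have hbot : Tendsto (fun y => f y * conj (g y)) atBot (𝓝 0) := by
    have hc : Tendsto (fun y => conj (g y)) atBot (𝓝 0) := by
      have h := (continuous_star.tendsto (0:ℂ)).comp hgt.2
      rw [star_zero] at h
      exact h
    have h := hft.2.mul hc
    rw [mul_zero] at h
    exact h
  have h0 := integral_deriv_eq_zero hdP (hint1.add hint2) htop hbot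
  rw [integral_add hint1 hint2] at h0
  exact eq_neg_of_add_eq_zero_left h0

private lemma tanh_sq_le_one (x : ℝ) : Real.tanh x ^ 2 ≤ 1 := by
  rw [Real.tanh_eq_sinh_div_cosh, div_pow]
  rw [div_le_one (by positivity)]
  nlinarith [Real.cosh_sq x, Real.cosh_pos x]

private lemma continuous_tanh' : Continuous Real.tanh := by
  have : Real.tanh = fun x => Real.sinh x / Real.cosh x := funext fun x => Real.tanh_eq_sinh_div_cosh x
  rw [this]
  exact Real.continuous_sinh.div Real.continuous_cosh fun x => (Real.cosh_pos x).ne'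

/-- If `v̂ ∈ H⁴(ℝ)` solves the weighted Swift–Hohenberg eigenvalue equation
`-(1+∂²)²v̂ + c₀∂v̂ + αv̂ - γ(1-h²)v̂ = λ v̂` with `Re λ > α` (and `α < 0`, `γ > 0`),
then `v̂ = 0`. -/
theorem stmt6 (c₀ γ α : ℝ) (hc₀ : 0 < c₀) (hc₁ : c₀ < 1) (hγ : 0 < γ) (hα : α < 0)
    (v : ℝ → ℂ) (hv : ContDiff ℝ 4 v)
    (hL2 : ∀ j : ℕ, j ≤ 4 → MemLp (iteratedDeriv j v) 2 volume)
    (lam : ℂ) (hlam : α < lam.re)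
    (heq : ∀ y : ℝ,
      -(v y + 2 * iteratedDeriv 2 v y + iteratedDeriv 4 v y)
        + (c₀ : ℂ) * deriv v y + (α : ℂ) * v y
        - (γ : ℂ) * (1 - (Real.tanh (y / 2) : ℂ) ^ 2) * v y = lam * v y) :
    v = 0 := by
  -- derivative structure
  have hD : ∀ j : ℕ, j < 4 → ∀ x, HasDerivAt (iteratedDeriv j v) (iteratedDeriv (j+1) v x) x := by
    intro j hj x
    have h1 : Differentiable ℝ (iteratedDeriv j v) :=
      hv.differentiable_iteratedDeriv j (by exact_mod_cast hj)
    simpa [iteratedDeriv_succ] using (h1 x).hasDerivAt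
  have hw0 : iteratedDeriv 0 v = v := iteratedDeriv_zero
  have m0 : MemLp v 2 volume := by simpa [hw0] using hL2 0 (by norm_num)
  have m1 : MemLp (iteratedDeriv 1 v) 2 volume := hL2 1 (by norm_num)
  have m2 : MemLp (iteratedDeriv 2 v) 2 volume := hL2 2 (by norm_num)
  have m3 : MemLp (iteratedDeriv 3 v) 2 volume := hL2 3 (by norm_num)
  have m4 : MemLp (iteratedDeriv 4 v) 2 volume := hL2 4 (by norm_num)
  have hD0 : ∀ x, HasDerivAt v (iteratedDeriv 1 v x) x := by
    intro x; have := hD 0 (by norm_num) x; rwa [hw0] at this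
  have hD1 : ∀ x, HasDerivAt (iteratedDeriv 1 v) (iteratedDeriv 2 v x) x := hD 1 (by norm_num)
  have hD2 : ∀ x, HasDerivAt (iteratedDeriv 2 v) (iteratedDeriv 3 v x) x := hD 2 (by norm_num)
  have hD3 : ∀ x, HasDerivAt (iteratedDeriv 3 v) (iteratedDeriv 4 v x) x := hD 3 (by norm_num)
  -- real quantities
  set N : ℝ := ∫ y, Complex.normSq (v y) with hNdef
  set P : ℝ := ∫ y, Complex.normSq (iteratedDeriv 1 v y) with hPdef
  set Q : ℝ := ∫ y, Complex.normSq (iteratedDeriv 2 v y) with hQdef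
  set r : ℝ := ∫ y, γ * (1 - Real.tanh (y/2)^2) * Complex.normSq (v y) with hrdef
  -- basic complex integrals
  have hI0 : ∫ y, v y * conj (v y) = (N : ℂ) := by
    rw [hNdef]
    calc ∫ y, v y * conj (v y) = ∫ y, ((Complex.normSq (v y) : ℝ) : ℂ) := by
          congr 1; funext y; exact Complex.mul_conj _
      _ = _ := integral_ofReal
  have hQQ : ∫ y, iteratedDeriv 2 v y * conj (iteratedDeriv 2 v y) = (Q : ℂ) := by
    rw [hQdef]
    calc ∫ y, iteratedDeriv 2 v y * conj (iteratedDeriv 2 v y)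
        = ∫ y, ((Complex.normSq (iteratedDeriv 2 v y) : ℝ) : ℂ) := by
          congr 1; funext y; exact Complex.mul_conj _
      _ = _ := integral_ofReal
  have hPP : ∫ y, iteratedDeriv 1 v y * conj (iteratedDeriv 1 v y) = (P : ℂ) := by
    rw [hPdef]
    calc ∫ y, iteratedDeriv 1 v y * conj (iteratedDeriv 1 v y)
        = ∫ y, ((Complex.normSq (iteratedDeriv 1 v y) : ℝ) : ℂ) := by
          congr 1; funext y; exact Complex.mul_conj _
      _ = _ := integral_ofReal
  -- A2 = -P
  have hA2 : ∫ y, iteratedDeriv 2 v y * conj (v y) = -(P : ℂ) := by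
    rw [ibp hD1 hD0 m1 m2 m0 m1, hPP]
  -- A4 = Q
  have hA4 : ∫ y, iteratedDeriv 4 v y * conj (v y) = (Q : ℂ) := by
    rw [ibp hD3 hD0 m3 m4 m0 m1]
    rw [ibp hD2 hD1 m2 m3 m1 m2, hQQ]
    ring
  -- Re A1 = 0
  have hA1 : (∫ y, iteratedDeriv 1 v y * conj (v y)).re = 0 := by
    have h1 := ibp hD0 hD0 m0 m1 m0 m1
    have h2 : conj (∫ y, iteratedDeriv 1 v y * conj (v y))
        = ∫ y, v y * conj (iteratedDeriv 1 v y) := by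
      rw [← integral_conj]
      congr 1; funext y; simp [mul_comm]
    have h3 : conj (∫ y, iteratedDeriv 1 v y * conj (v y))
        = -(∫ y, iteratedDeriv 1 v y * conj (v y)) := by
      rw [h2]
      linear_combination h1
    have h4 := congrArg Complex.re h3
    simp only [Complex.conj_re, Complex.neg_re] at h4
    linarith
  -- weighted term
  have htanh2 : ∀ y : ℝ, 0 ≤ 1 - Real.tanh (y/2) ^ 2 := fun y => by
    nlinarith [tanh_sq_le_one (y/2)]
  have hcontns : Continuous fun y : ℝ => Complex.normSq (v y) :=
    Complex.continuous_normSq.comp hv.continuous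
  have hiN : Integrable (fun y => Complex.normSq (v y)) volume := integrable_normSq m0
  have hir : Integrable (fun y => γ * (1 - Real.tanh (y/2)^2) * Complex.normSq (v y)) volume := by
    refine (hiN.const_mul γ).mono' ?_ (Eventually.of_forall fun y => ?_)
    · exact ((continuous_const.mul ((continuous_const.sub
        ((continuous_tanh'.comp (continuous_id.div_const 2)).pow 2)))).mul hcontns).aestronglyMeasurable
    · have h1 := htanh2 y
      have h2 := Complex.normSq_nonneg (v y)
      have h3 : 0 ≤ γ * (1 - Real.tanh (y/2)^2) * Complex.normSq (v y) :=
        mul_nonneg (mul_nonneg hγ.le h1) h2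
      rw [Real.norm_eq_abs, _root_.abs_of_nonneg h3]
      have h4 : 0 ≤ γ * (Real.tanh (y/2)^2 * Complex.normSq (v y)) :=
        mul_nonneg hγ.le (mul_nonneg (sq_nonneg _) h2)
      nlinarith
  have hr0 : 0 ≤ r := by
    rw [hrdef]
    exact integral_nonneg fun y =>
      mul_nonneg (mul_nonneg hγ.le (htanh2 y)) (Complex.normSq_nonneg _)
  have hR : ∫ y, ((γ:ℂ) * (1 - (Real.tanh (y/2) : ℂ)^2)) * (v y * conj (v y)) = (r : ℂ) := by
    rw [hrdef]
    calc ∫ y, ((γ:ℂ) * (1 - (Real.tanh (y/2) : ℂ)^2)) * (v y * conj (v y))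
        = ∫ y, ((γ * (1 - Real.tanh (y/2)^2) * Complex.normSq (v y) : ℝ) : ℂ) := by
          congr 1; funext y
          rw [Complex.mul_conj]
          push_cast [-Complex.ofReal_tanh]
          ring
      _ = _ := integral_ofReal
  have hcoefc : Continuous fun y : ℝ => ((γ * (1 - Real.tanh (y/2)^2) : ℝ) : ℂ) :=
    Complex.continuous_ofReal.comp (continuous_const.mul (continuous_const.sub
      ((continuous_tanh'.comp (continuous_id.div_const 2)).pow 2)))
  have hint0' : Integrable (fun y => v y * conj (v y)) volume :=
    integrable_mul_L2 m0 (memL2_conj m0)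
  have hintR' : Integrable
      (fun y => ((γ * (1 - Real.tanh (y/2)^2) : ℝ) : ℂ) * (v y * conj (v y))) volume := by
    refine hint0'.bdd_mul hcoefc.aestronglyMeasurable (c := γ) (Eventually.of_forall fun y => ?_)
    rw [Complex.norm_real, Real.norm_eq_abs,
      _root_.abs_of_nonneg (mul_nonneg hγ.le (htanh2 y))]
    nlinarith [htanh2 y, sq_nonneg (Real.tanh (y/2))]
  have hintR : Integrable
      (fun y => ((γ:ℂ) * (1 - (Real.tanh (y/2) : ℂ)^2)) * (v y * conj (v y))) volume := by
    refine hintR'.congr (Eventually.of_forall fun y => ?_)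
    beta_reduce
    push_cast [-Complex.ofReal_tanh]
    ring
  -- integrability of the basic products
  have mc0 := memL2_conj m0
  have hint0 : Integrable (fun y => v y * conj (v y)) volume := integrable_mul_L2 m0 mc0
  have hint1 : Integrable (fun y => iteratedDeriv 1 v y * conj (v y)) volume :=
    integrable_mul_L2 m1 mc0
  have hint2 : Integrable (fun y => iteratedDeriv 2 v y * conj (v y)) volume :=
    integrable_mul_L2 m2 mc0
  have hint4 : Integrable (fun y => iteratedDeriv 4 v y * conj (v y)) volume :=
    integrable_mul_L2 m4 mc0
  -- pointwise identity from the eigenvalue equation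
  have key : ∀ y : ℝ, ((α:ℂ) - 1 - lam) * (v y * conj (v y))
      + (-2 : ℂ) * (iteratedDeriv 2 v y * conj (v y))
      + (-1 : ℂ) * (iteratedDeriv 4 v y * conj (v y))
      + (c₀:ℂ) * (iteratedDeriv 1 v y * conj (v y))
      + (-1 : ℂ) * (((γ:ℂ) * (1 - (Real.tanh (y/2) : ℂ)^2)) * (v y * conj (v y))) = 0 := by
    intro y
    have h := heq y
    rw [show deriv v = iteratedDeriv 1 v from iteratedDeriv_one.symm] at h
    linear_combination (conj (v y)) * h
  -- integrate the identity
  have i1 : Integrable (fun y => ((α:ℂ) - 1 - lam) * (v y * conj (v y))) volume :=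
    hint0.const_mul _
  have i2 : Integrable (fun y => (-2 : ℂ) * (iteratedDeriv 2 v y * conj (v y))) volume :=
    hint2.const_mul _
  have i3 : Integrable (fun y => (-1 : ℂ) * (iteratedDeriv 4 v y * conj (v y))) volume :=
    hint4.const_mul _
  have i4 : Integrable (fun y => (c₀:ℂ) * (iteratedDeriv 1 v y * conj (v y))) volume :=
    hint1.const_mul _
  have i5 : Integrable (fun y =>
      (-1 : ℂ) * (((γ:ℂ) * (1 - (Real.tanh (y/2) : ℂ)^2)) * (v y * conj (v y)))) volume :=
    hintR.const_mul _
  have i12 : Integrable (fun y => ((α:ℂ) - 1 - lam) * (v y * conj (v y))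
      + (-2 : ℂ) * (iteratedDeriv 2 v y * conj (v y))) volume := i1.add i2
  have i123 : Integrable (fun y => ((α:ℂ) - 1 - lam) * (v y * conj (v y))
      + (-2 : ℂ) * (iteratedDeriv 2 v y * conj (v y))
      + (-1 : ℂ) * (iteratedDeriv 4 v y * conj (v y))) volume := i12.add i3
  have i1234 : Integrable (fun y => ((α:ℂ) - 1 - lam) * (v y * conj (v y))
      + (-2 : ℂ) * (iteratedDeriv 2 v y * conj (v y))
      + (-1 : ℂ) * (iteratedDeriv 4 v y * conj (v y))
      + (c₀:ℂ) * (iteratedDeriv 1 v y * conj (v y))) volume := i123.add i4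
  have hzero : ∫ y, (((α:ℂ) - 1 - lam) * (v y * conj (v y))
      + (-2 : ℂ) * (iteratedDeriv 2 v y * conj (v y))
      + (-1 : ℂ) * (iteratedDeriv 4 v y * conj (v y))
      + (c₀:ℂ) * (iteratedDeriv 1 v y * conj (v y))
      + (-1 : ℂ) * (((γ:ℂ) * (1 - (Real.tanh (y/2) : ℂ)^2)) * (v y * conj (v y)))) = 0 := by
    have heq0 : (fun y : ℝ => (((α:ℂ) - 1 - lam) * (v y * conj (v y))
      + (-2 : ℂ) * (iteratedDeriv 2 v y * conj (v y))
      + (-1 : ℂ) * (iteratedDeriv 4 v y * conj (v y))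
      + (c₀:ℂ) * (iteratedDeriv 1 v y * conj (v y))
      + (-1 : ℂ) * (((γ:ℂ) * (1 - (Real.tanh (y/2) : ℂ)^2)) * (v y * conj (v y))))) = fun _ => 0 :=
      funext key
    rw [heq0, integral_zero]
  rw [integral_add i1234 i5,
    integral_add i123 i4,
    integral_add i12 i3,
    integral_add i1 i2,
    integral_const_mul, integral_const_mul, integral_const_mul, integral_const_mul,
    integral_const_mul, hI0, hA2, hA4, hR] at hzero
  set A1 : ℂ := ∫ y, iteratedDeriv 1 v y * conj (v y) with hA1def
  -- extract the real part
  have hre := congrArg Complex.re hzero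
  simp only [Complex.add_re, Complex.mul_re, Complex.sub_re, Complex.sub_im, Complex.add_im,
    Complex.mul_im, Complex.ofReal_re, Complex.ofReal_im, Complex.neg_re, Complex.neg_im,
    Complex.one_re, Complex.one_im, Complex.zero_re, Complex.re_ofNat, Complex.im_ofNat, hA1, mul_zero, zero_mul, sub_zero,
    zero_sub, neg_zero, add_zero, zero_add, mul_one, mul_neg, neg_neg] at hre
  -- hre should now be a real linear relation among N, P, Q, r, lam.re
  -- positivity of ∫ |v + v''|²
  have hS0 : 0 ≤ ∫ y, Complex.normSq (v y + iteratedDeriv 2 v y) :=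
    integral_nonneg fun y => Complex.normSq_nonneg _
  have hconjA2 : ∫ y, v y * conj (iteratedDeriv 2 v y) = -(P : ℂ) := by
    have h2 : conj (∫ y, iteratedDeriv 2 v y * conj (v y))
        = ∫ y, v y * conj (iteratedDeriv 2 v y) := by
      rw [← integral_conj]
      congr 1; funext y; simp [mul_comm]
    rw [← h2, hA2]
    simp
  have hintc2 : Integrable (fun y => v y * conj (iteratedDeriv 2 v y)) volume :=
    integrable_mul_L2 m0 (memL2_conj m2)
  have hint22 : Integrable (fun y => iteratedDeriv 2 v y * conj (iteratedDeriv 2 v y)) volume :=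
    integrable_mul_L2 m2 (memL2_conj m2)
  have hSc : ((∫ y, Complex.normSq (v y + iteratedDeriv 2 v y) : ℝ) : ℂ)
      = (N : ℂ) - (P : ℂ) - (P : ℂ) + (Q : ℂ) := by
    have j12 : Integrable (fun y => v y * conj (v y) + v y * conj (iteratedDeriv 2 v y)) volume :=
      hint0.add hintc2
    have j34 : Integrable (fun y => iteratedDeriv 2 v y * conj (v y)
        + iteratedDeriv 2 v y * conj (iteratedDeriv 2 v y)) volume := hint2.add hint22
    calc ((∫ y, Complex.normSq (v y + iteratedDeriv 2 v y) : ℝ) : ℂ)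
        = ∫ y, ((Complex.normSq (v y + iteratedDeriv 2 v y) : ℝ) : ℂ) := integral_ofReal.symm
      _ = ∫ y, (v y * conj (v y) + v y * conj (iteratedDeriv 2 v y)
            + (iteratedDeriv 2 v y * conj (v y)
              + iteratedDeriv 2 v y * conj (iteratedDeriv 2 v y))) := by
          congr 1; funext y
          rw [← Complex.mul_conj, map_add]
          ring
      _ = _ := by
          rw [integral_add j12 j34, integral_add hint0 hintc2, integral_add hint2 hint22,
            hI0, hconjA2, hA2, hQQ]
          ring
  have hS : (0:ℝ) ≤ N - 2*P + Q := by
    have := hSc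
    rw [show ((N : ℂ) - (P : ℂ) - (P : ℂ) + (Q : ℂ)) = ((N - P - P + Q : ℝ) : ℂ) by push_cast; ring]
      at this
    have h5 := Complex.ofReal_inj.mp this
    linarith [hS0, h5.symm.le, h5.le]
  have hN0 : 0 ≤ N := integral_nonneg fun y => Complex.normSq_nonneg _
  -- conclude N = 0
  have hN : N = 0 := by nlinarith [hre, hS, hr0, hN0, hlam]
  -- finish
  have hVae : (fun y => Complex.normSq (v y)) =ᵐ[volume] 0 :=
    (integral_eq_zero_iff_of_nonneg (fun y => Complex.normSq_nonneg _) hiN).mp hN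
  have hfin : (fun y => Complex.normSq (v y)) = 0 :=
    (Continuous.ae_eq_iff_eq volume hcontns continuous_zero).mp hVae
  funext y
  have := congrFun hfin y
  simpa using Complex.normSq_eq_zero.mp (by simpa using this)
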